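/- Let t ≥ 3. If C ⊆ Q^n is a wide-sense t-frameproof code of size m, then m ≤ C(n, ⌈(n - t + 1)/C(t,2)⌉) + t. -/
import Mathlib

open Finset

section Helpers

/-- `choose n` is monotone up to the middle. -/
lemma my_choose_mono_left {n : ℕ} : ∀ d, d ≤ n / 2 → ∀ k, k ≤ d → n.choose k ≤ n.choose d := by
  intro d
  induction d with
  | zero => intro _ k hk; rw [Nat.le_zero.1 hk]
  | succ d ih =>
    intro hd k hk
    rcases Nat.eq_or_lt_of_le hk with h | h
    · subst h; exact le_rfl
    · exact (ih (by omega) k (by omega)).trans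
        (Nat.choose_le_succ_of_lt_half_left (by omega))

/-- An antichain of sets of size at most `d ≤ n/2` has at most `n.choose d` members. -/
lemma my_antichain_card_le {n d : ℕ} (hd : d ≤ n / 2) (ℬ : Finset (Finset (Fin n)))
    (hanti : IsAntichain (· ⊆ ·) (ℬ : Set (Finset (Fin n))))
    (hsize : ∀ A ∈ ℬ, A.card ≤ d) : ℬ.card ≤ n.choose d := by
  classical
  have hpos : 0 < (n.choose d : ℚ) := by
    exact_mod_cast Nat.choose_pos (le_trans hd (Nat.div_le_self _ _))
  have h1 : ∑ k ∈ range (n + 1), ((ℬ # k).card : ℚ) / (n.choose k) ≤ 1 := by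
    have := Finset.sum_card_slice_div_choose_le_one (𝕜 := ℚ) (α := Fin n) hanti
    simpa [Fintype.card_fin] using this
  have h2 : ∀ k ∈ range (n + 1),
      ((ℬ # k).card : ℚ) / (n.choose d) ≤ ((ℬ # k).card : ℚ) / (n.choose k) := by
    intro k hk
    rcases (ℬ # k).eq_empty_or_nonempty with he | hne
    · simp [he]
    · obtain ⟨A, hA⟩ := hne
      rw [Finset.mem_slice] at hA
      have hkd : k ≤ d := hA.2 ▸ hsize A hA.1
      have hmono : (n.choose k : ℚ) ≤ n.choose d := by
        exact_mod_cast my_choose_mono_left d hd k hkd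
      have hckpos : 0 < (n.choose k : ℚ) := by
        exact_mod_cast Nat.choose_pos (by omega : k ≤ n)
      exact div_le_div_of_nonneg_left (by positivity) hckpos hmono
  have h3 : ∑ k ∈ range (n + 1), ((ℬ # k).card : ℚ) / (n.choose d) ≤ 1 :=
    (Finset.sum_le_sum h2).trans h1
  rw [← Finset.sum_div, div_le_one hpos] at h3
  have h4 : ∑ k ∈ range (n + 1), ((ℬ # k).card : ℚ) = (ℬ.card : ℚ) := by
    rw [← Nat.cast_sum]
    norm_cast
    have := Finset.sum_card_slice (α := Fin n) (𝒜 := ℬ)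
    rw [Fintype.card_fin] at this
    rw [← this]
    congr 1
    ext x
    simp [Nat.lt_succ_iff]
  rw [h4] at h3
  exact_mod_cast h3

/-- Füredi-type bound for cover-free families. -/
lemma my_furedi {n r : ℕ} (hr : 2 ≤ r) (𝒜 : Finset (Finset (Fin n)))
    (hcf : ∀ F ∈ 𝒜, ∀ S ⊆ 𝒜.erase F, S.Nonempty → S.card ≤ r →
      ∃ x ∈ F, ∀ G ∈ S, x ∉ G) :
    𝒜.card ≤ n.choose ((n - r) ⌈/⌉ (r + 1).choose 2) + r := by
  classical
  set C : ℕ := (r + 1).choose 2 with hC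
  set d : ℕ := (n - r) ⌈/⌉ C with hdd
  have hC3 : 3 ≤ C := by
    have : (3 : ℕ).choose 2 ≤ (r + 1).choose 2 := Nat.choose_le_choose 2 (by omega)
    simpa using this
  have hCpos : 0 < C := by omega
  have hd2 : d ≤ n / 2 := by
    rw [hdd, ceilDiv_le_iff_le_mul hCpos]
    have h1 : n - r ≤ 3 * (n / 2) := by omega
    calc n - r ≤ 3 * (n / 2) := h1
      _ ≤ C * (n / 2) := Nat.mul_le_mul_right _ hC3
  have hnr : n - r ≤ C * d := by
    have := le_smul_ceilDiv (α := ℕ) (β := ℕ) (b := n - r) hCpos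
    simpa [smul_eq_mul] using this
  -- Good sets: have an "own" subset of size at most d
  set Good : Finset (Fin n) → Prop :=
    fun F => ∃ A, A ⊆ F ∧ A.card ≤ d ∧ ∀ G ∈ 𝒜, G ≠ F → ¬ A ⊆ G with hGood
  -- the greedy covering lemma
  have greedy : ∀ k, ∀ F ∈ 𝒜, ¬ Good F →
      ∀ T ⊆ 𝒜.erase F, T.card + k ≤ r → k * d + 1 ≤ (F \ T.sup id).card := by
    intro k
    induction k with
    | zero =>
      intro F hF hbad T hT hcard
      have hbad' : ∀ A, A ⊆ F → A.card ≤ d → ∃ G ∈ 𝒜, G ≠ F ∧ A ⊆ G := by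
        intro A hAF hAd
        by_contra hcon
        push_neg at hcon
        exact hbad ⟨A, hAF, hAd, fun G hG hne => hcon G hG hne⟩
      rcases T.eq_empty_or_nonempty with he | hne
      · subst he
        obtain ⟨G, hG, hGne, -⟩ := hbad' ∅ (Finset.empty_subset _) (Nat.zero_le _)
        obtain ⟨x, hx, -⟩ := hcf F hF {G}
          (by simp [Finset.mem_erase, hGne, hG])
          ⟨G, Finset.mem_singleton_self G⟩ (by simp; omega)
        simp only [Finset.sup_empty, Finset.bot_eq_empty, Finset.sdiff_empty]
        have : x ∈ F := hx
        have hpos : 0 < F.card := Finset.card_pos.2 ⟨x, hx⟩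
        omega
      · obtain ⟨x, hx, hxG⟩ := hcf F hF T hT hne (by omega)
        have : x ∈ F \ T.sup id := by
          rw [Finset.mem_sdiff]
          refine ⟨hx, fun hmem => ?_⟩
          obtain ⟨G, hG, hxG'⟩ := Finset.mem_sup.1 hmem
          exact hxG G hG hxG'
        have hpos : 0 < (F \ T.sup id).card := Finset.card_pos.2 ⟨x, this⟩
        omega
    | succ k ih =>
      intro F hF hbad T hT hcard
      have hbad' : ∀ A, A ⊆ F → A.card ≤ d → ∃ G ∈ 𝒜, G ≠ F ∧ A ⊆ G := by
        intro A hAF hAd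
        by_contra hcon
        push_neg at hcon
        exact hbad ⟨A, hAF, hAd, fun G hG hne => hcon G hG hne⟩
      set U := F \ T.sup id with hU
      have hUk : k * d + 1 ≤ U.card := ih F hF hbad T hT (by omega)
      by_cases hd0 : d = 0
      · simpa [hd0] using hUk
      -- pick A ⊆ U of size min d U.card
      obtain ⟨A, hAU, hAcard⟩ := Finset.exists_subset_card_eq
        (min_le_right d U.card)
      have hAF : A ⊆ F := hAU.trans (Finset.sdiff_subset)
      have hAd : A.card ≤ d := hAcard.trans_le (min_le_left _ _)
      obtain ⟨G, hG𝒜, hGne, hAG⟩ := hbad' A hAF hAd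
      have hAne : A.Nonempty := by
        rw [← Finset.card_pos, hAcard]
        omega
      have hGT : G ∉ T := by
        intro hGT
        obtain ⟨x, hxA⟩ := hAne
        have hxU : x ∈ U := hAU hxA
        have : x ∈ T.sup id := Finset.le_sup (f := id) hGT (hAG hxA)
        rw [hU, Finset.mem_sdiff] at hxU
        exact hxU.2 this
      have hT' : insert G T ⊆ 𝒜.erase F := by
        intro x hx
        rcases Finset.mem_insert.1 hx with rfl | hx
        · exact Finset.mem_erase.2 ⟨hGne, hG𝒜⟩
        · exact hT hx
      have hcard' : (insert G T).card + k ≤ r := by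
        rw [Finset.card_insert_of_notMem hGT]; omega
      have hstep : k * d + 1 ≤ (F \ (insert G T).sup id).card :=
        ih F hF hbad (insert G T) hT' hcard'
      have hsub : F \ (insert G T).sup id ⊆ U \ A := by
        intro x hx
        rw [Finset.mem_sdiff] at hx
        rw [Finset.sup_insert] at hx
        rw [Finset.mem_sdiff]
        constructor
        · rw [hU, Finset.mem_sdiff]
          exact ⟨hx.1, fun h => hx.2 (Finset.mem_union.2 (Or.inr h))⟩
        · intro hxA
          exact hx.2 (Finset.mem_union.2 (Or.inl (hAG hxA)))
      have h5 : k * d + 1 ≤ (U \ A).card := hstep.trans (Finset.card_le_card hsub)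
      have h6 : (U \ A).card = U.card - A.card := Finset.card_sdiff_of_subset hAU
      have h7 : d ≤ U.card := by
        by_contra h
        push_neg at h
        have : A.card = U.card := by rw [hAcard]; omega
        omega
      have h8 : A.card = d := by rw [hAcard]; omega
      have : k * d + 1 + d ≤ U.card := by omega
      calc (k + 1) * d + 1 = k * d + 1 + d := by ring
        _ ≤ U.card := this
  -- bad members number at most r
  set Bad := 𝒜.filter (fun F => ¬ Good F) with hBad
  have hbadcard : Bad.card ≤ r := by
    by_contra hcon
    push_neg at hcon
    obtain ⟨B, hBsub, hBcard⟩ := Finset.exists_subset_card_eq (by omega : r + 1 ≤ Bad.card)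
    have key : ∀ j, ∀ B' ⊆ B, B'.card = j →
        d * (∑ i ∈ range j, (r - i)) + j ≤ (B'.sup id).card := by
      intro j
      induction j with
      | zero =>
        intro B' _ hB'
        rw [Finset.card_eq_zero] at hB'
        simp [hB']
      | succ j ihj =>
        intro B' hB'sub hB'card
        have hB'pos : 0 < B'.card := by omega
        obtain ⟨F, hFB'⟩ := Finset.card_pos.1 hB'pos
        have hFBad : F ∈ Bad := hBsub (hB'sub hFB')
        rw [hBad, Finset.mem_filter] at hFBad
        set B'' := B'.erase F with hB''
        have hB''card : B''.card = j := by
          rw [hB'', Finset.card_erase_of_mem hFB', hB'card]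
          omega
        have hB''sub : B'' ⊆ B := (Finset.erase_subset _ _).trans hB'sub
        have ih2 := ihj B'' hB''sub hB''card
        have hjr : j ≤ r := by
          have := Finset.card_le_card hB'sub
          omega
        have hTsub : B'' ⊆ 𝒜.erase F := by
          intro G hG
          rw [Finset.mem_erase]
          have hGBad : G ∈ Bad := hBsub (hB''sub hG)
          rw [hBad, Finset.mem_filter] at hGBad
          exact ⟨(Finset.mem_erase.1 hG).1, hGBad.1⟩
        have hgr := greedy (r - j) F hFBad.1 hFBad.2 B'' hTsub (by omega)
        have hsup : B'.sup id = F ∪ B''.sup id := by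
          conv_lhs => rw [← Finset.insert_erase hFB']
          rw [Finset.sup_insert]
          rfl
        have hcount : (F \ B''.sup id).card + (B''.sup id).card = (F ∪ B''.sup id).card :=
          Finset.card_sdiff_add_card F _
        rw [hsup]
        rw [Finset.sum_range_succ]
        have := Nat.mul_le_mul_left d (le_refl (∑ i ∈ range j, (r - i)))
        nlinarith [hgr, ih2, hcount]
    have hfinal := key (r + 1) B (le_refl B) hBcard
    have hsum : ∑ i ∈ range (r + 1), (r - i) = C := by
      have h1 : ∑ i ∈ range (r + 1), (r - i) = ∑ i ∈ range (r + 1), i := by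
        have := Finset.sum_range_reflect (fun i => i) (r + 1)
        simpa using this
      rw [h1]
      have h2 : (∑ i ∈ range (r + 1), i) * 2 = (r + 1) * r := by
        rw [Finset.sum_range_id_mul_two]
        simp
      have h3 : C = (r + 1) * r / 2 := by
        rw [hC, Nat.choose_two_right]
        simp
      omega
    rw [hsum] at hfinal
    have hcomm : C * d = d * C := Nat.mul_comm _ _
    have hle : (B.sup id).card ≤ n := by
      have := Finset.card_le_univ (B.sup id)
      simpa [Fintype.card_fin] using this
    omega
  -- good members: injection into an antichain of small sets
  set Gd := 𝒜.filter Good with hGd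
  have hGoodChoice : ∀ F ∈ Gd, ∃ A, A ⊆ F ∧ A.card ≤ d ∧ ∀ G ∈ 𝒜, G ≠ F → ¬ A ⊆ G := by
    intro F hF
    rw [hGd, Finset.mem_filter] at hF
    exact hF.2
  set f : Finset (Fin n) → Finset (Fin n) :=
    fun F => if h : Good F then h.choose else ∅ with hf
  have hfspec : ∀ F ∈ Gd, f F ⊆ F ∧ (f F).card ≤ d ∧ ∀ G ∈ 𝒜, G ≠ F → ¬ f F ⊆ G := by
    intro F hF
    rw [hGd, Finset.mem_filter] at hF
    rw [hf]
    simp only [dif_pos hF.2]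
    exact hF.2.choose_spec
  have hGdsub : Gd ⊆ 𝒜 := Finset.filter_subset _ _
  have hinjOn : Set.InjOn f Gd := by
    intro F1 h1 F2 h2 heq
    by_contra hne
    have s1 := hfspec F1 h1
    have s2 := hfspec F2 h2
    exact s1.2.2 F2 (hGdsub h2) (Ne.symm hne) (heq ▸ s2.1)
  set ℬ := Gd.image f with hℬ
  have hℬcard : ℬ.card = Gd.card := Finset.card_image_of_injOn hinjOn
  have hanti : IsAntichain (· ⊆ ·) (ℬ : Set (Finset (Fin n))) := by
    intro A1 hA1 A2 hA2 hne hsub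
    simp only [hℬ, Finset.coe_image, Set.mem_image, Finset.mem_coe] at hA1 hA2
    obtain ⟨F1, hF1, rfl⟩ := hA1
    obtain ⟨F2, hF2, rfl⟩ := hA2
    have s1 := hfspec F1 hF1
    have hF1F2 : F1 ≠ F2 := by
      rintro rfl; exact hne rfl
    exact s1.2.2 F2 (hGdsub hF2) (Ne.symm hF1F2) (hsub.trans (hfspec F2 hF2).1)
  have hsize : ∀ A ∈ ℬ, A.card ≤ d := by
    intro A hA
    rw [hℬ, Finset.mem_image] at hA
    obtain ⟨F, hF, rfl⟩ := hA
    exact (hfspec F hF).2.1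
  have hGdcard : Gd.card ≤ n.choose d := by
    rw [← hℬcard]
    exact my_antichain_card_le hd2 ℬ hanti hsize
  have hsplit : Gd.card + Bad.card = 𝒜.card := by
    rw [hGd, hBad]
    exact Finset.card_filter_add_card_filter_not _
  omega

end Helpers

/-- The code with codewords `c 1, …, c m` is wide-sense `t`-frameproof. -/
def WideSenseFP {m n : ℕ} {Q : Type*} (t : ℕ) (c : Fin m → Fin n → Q) : Prop :=
  ∀ i : Fin m, ∀ S : Finset (Fin m), i ∉ S → S.Nonempty → S.card ≤ t →
    ∃ l : Fin n, (∀ j ∈ S, c j l ≠ c i l) ∧ ∀ j ∈ S, ∀ j' ∈ S, c j l = c j' l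

theorem stmt_14 (n m t : ℕ) (ht : 3 ≤ t) (Q : Type*)
    (c : Fin m → Fin n → Q) (hinj : Function.Injective c) (hfp : WideSenseFP t c) :
    m ≤ n.choose ((n - t + 1) ⌈/⌉ t.choose 2) + t := by
  classical
  by_cases hm0 : m = 0
  · subst hm0; omega
  have hm1 : 1 ≤ m := by omega
  set i₀ : Fin m := ⟨0, by omega⟩ with hi₀
  by_cases hn0 : n = 0
  · -- all codewords agree, so m ≤ 1
    subst hn0
    have : m ≤ 1 := by
      by_contra h
      push_neg at h
      have h01 : (⟨0, by omega⟩ : Fin m) ≠ ⟨1, by omega⟩ := by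
        intro hc; simpa using congrArg Fin.val hc
      exact h01 (hinj (funext fun l => l.elim0))
    omega
  -- disagreement sets with codeword i₀
  set A : Fin m → Finset (Fin n) := fun i => univ.filter (fun l => c i l ≠ c i₀ l) with hA
  have hkey : ∀ i : Fin m, i ≠ i₀ → ∀ S : Finset (Fin m), (∀ j ∈ S, j ≠ i₀) → i ∉ S →
      S.Nonempty → S.card ≤ t - 1 → ∃ l, l ∈ A i ∧ ∀ j ∈ S, l ∉ A j := by
    intro i hi S hS hiS hSne hScard
    have hi₀S : i₀ ∉ S := fun h => hS i₀ h rfl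
    obtain ⟨l, hdiff, hagree⟩ := hfp i (insert i₀ S)
      (by simp [Finset.mem_insert]; exact ⟨Ne.symm (by exact fun h => hi h.symm), hiS⟩)
      ⟨i₀, Finset.mem_insert_self _ _⟩
      (by rw [Finset.card_insert_of_notMem hi₀S]; omega)
    refine ⟨l, ?_, ?_⟩
    · rw [hA]
      simp only [Finset.mem_filter, Finset.mem_univ, true_and]
      exact fun h => hdiff i₀ (Finset.mem_insert_self _ _) h.symm
    · intro j hj
      rw [hA]
      simp only [Finset.mem_filter, Finset.mem_univ, true_and, not_not]
      exact hagree j (Finset.mem_insert_of_mem hj) i₀ (Finset.mem_insert_self _ _)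
  have hAinj : Set.InjOn A (univ.erase i₀) := by
    intro i hi i' hi' heq
    by_contra hne
    have hi1 : i ≠ i₀ := (Finset.mem_erase.1 hi).1
    have hi'1 : i' ≠ i₀ := (Finset.mem_erase.1 hi').1
    obtain ⟨l, hl1, hl2⟩ := hkey i hi1 {i'} (by simpa using hi'1)
      (by simpa using hne) ⟨i', Finset.mem_singleton_self _⟩
      (by rw [Finset.card_singleton]; omega)
    exact hl2 i' (Finset.mem_singleton_self _) (heq ▸ hl1)
  set 𝒜 : Finset (Finset (Fin n)) := (univ.erase i₀).image A with h𝒜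
  have h𝒜card : 𝒜.card = m - 1 := by
    rw [h𝒜, Finset.card_image_of_injOn hAinj, Finset.card_erase_of_mem (Finset.mem_univ _),
      Finset.card_univ, Fintype.card_fin]
  have hcf : ∀ F ∈ 𝒜, ∀ S ⊆ 𝒜.erase F, S.Nonempty → S.card ≤ t - 1 →
      ∃ x ∈ F, ∀ G ∈ S, x ∉ G := by
    intro F hF S hSsub hSne hScard
    rw [h𝒜, Finset.mem_image] at hF
    obtain ⟨i, hi, rfl⟩ := hF
    have hi1 : i ≠ i₀ := (Finset.mem_erase.1 hi).1
    set T : Finset (Fin m) := (univ.erase i₀).filter (fun j => A j ∈ S) with hT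
    have hTimage : T.image A = S := by
      apply Finset.Subset.antisymm
      · intro G hG
        rw [Finset.mem_image] at hG
        obtain ⟨j, hj, rfl⟩ := hG
        exact (Finset.mem_filter.1 hj).2
      · intro G hG
        have hG𝒜 : G ∈ 𝒜 := Finset.mem_of_mem_erase (hSsub hG)
        rw [h𝒜, Finset.mem_image] at hG𝒜
        obtain ⟨j, hj, rfl⟩ := hG𝒜
        rw [Finset.mem_image]
        exact ⟨j, Finset.mem_filter.2 ⟨hj, hG⟩, rfl⟩
    have hTsub : (T : Set (Fin m)) ⊆ (univ.erase i₀ : Finset (Fin m)) := by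
      intro j hj
      exact Finset.mem_of_mem_filter j hj
    have hTcard : T.card = S.card := by
      rw [← hTimage]
      exact (Finset.card_image_of_injOn (hAinj.mono hTsub)).symm
    have hTne : T.Nonempty := by
      obtain ⟨G, hG⟩ := hSne
      rw [← hTimage, Finset.mem_image] at hG
      obtain ⟨j, hj, -⟩ := hG
      exact ⟨j, hj⟩
    have hiT : i ∉ T := by
      intro hiT
      have : A i ∈ S := (Finset.mem_filter.1 hiT).2
      exact (Finset.mem_erase.1 (hSsub this)).1 rfl
    have hTnotz : ∀ j ∈ T, j ≠ i₀ := by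
      intro j hj
      exact (Finset.mem_erase.1 (Finset.mem_filter.1 hj).1).1
    obtain ⟨l, hl1, hl2⟩ := hkey i hi1 T hTnotz hiT hTne (by omega)
    refine ⟨l, hl1, ?_⟩
    intro G hG
    rw [← hTimage, Finset.mem_image] at hG
    obtain ⟨j, hj, rfl⟩ := hG
    exact hl2 j hj
  have hmain := my_furedi (by omega : 2 ≤ t - 1) 𝒜 (by
    have h : t - 1 + 1 = t := by omega
    intro F hF S hS hne hcard
    exact hcf F hF S hS hne hcard)
  rw [h𝒜card] at hmain
  have htt : t - 1 + 1 = t := by omega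
  rw [htt] at hmain
  -- hmain : m - 1 ≤ n.choose ((n - (t-1)) ⌈/⌉ t.choose 2) + (t - 1)
  by_cases hnt : t ≤ n
  · have heq : n - (t - 1) = n - t + 1 := by omega
    rw [heq] at hmain
    omega
  · -- n < t : n - (t-1) = 0, so d' = 0 and m ≤ t; also d'' = 1 and n ≥ 1
    have heq : n - (t - 1) = 0 := by omega
    rw [heq] at hmain
    simp only [zero_ceilDiv, Nat.choose_zero_right] at hmain
    -- hmain : m - 1 ≤ 1 + (t - 1)
    have hd'' : (n - t + 1) ⌈/⌉ t.choose 2 = 1 := by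
      have hnt0 : n - t = 0 := by omega
      rw [hnt0]
      have hC3 : 3 ≤ t.choose 2 := by
        have : (3 : ℕ).choose 2 ≤ t.choose 2 := Nat.choose_le_choose 2 (by omega)
        simpa using this
      rw [Nat.ceilDiv_eq_add_pred_div]
      have : (1 + t.choose 2 - 1) = t.choose 2 := by omega
      rw [this, Nat.div_self (by omega)]
    rw [hd'', Nat.choose_one_right]
    omega
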